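/- Given an internal tensor structure (⊗, m) on an S-fibered category H, the data assigning to (S;1) the category H(S), to (S;2) the category H(S) × H(S), with inverse images f^*, (f^*, f^*), and f^* ∘ (⊗) respectively, and with connection isomorphisms built from conn and m, defines an (S × I)-fibered category H^⊗ (i.e., the cocycle condition holds in all five cases of composable pairs). -/

import Mathlib

open CategoryTheory Limits

universe v u w z

/-- An `S`-fibered category, presented as a (strictly unital) contravariant
pseudofunctor: a category `H S` for every object, an inverse image functor `f^*`
for every morphism (with `(𝟙 S)^* = 𝟭`), and connection isomorphisms
`conn f g : (f ≫ g)^* ≅ g^* ⋙ f^*` satisfying the cocycle condition (S-fib-1). -/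
structure SFib (S : Type z) [Category.{w} S] where
  H : S → Type u
  [cat : ∀ s, Category.{v} (H s)]
  pull : ∀ {t s : S}, (t ⟶ s) → H s ⥤ H t
  pull_id : ∀ s : S, pull (𝟙 s) = 𝟭 (H s)
  conn : ∀ {t s v : S} (f : t ⟶ s) (g : s ⟶ v), pull (f ≫ g) ≅ pull g ⋙ pull f
  cocycle :
    ∀ {t s v w : S} (f : t ⟶ s) (g : s ⟶ v) (h : v ⟶ w),
      (conn f (g ≫ h)).hom ≫ Functor.whiskerRight (conn g h).hom (pull f) =
        eqToHom (show pull (f ≫ g ≫ h) = pull ((f ≫ g) ≫ h) by rw [Category.assoc]) ≫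
          (conn (f ≫ g) h).hom ≫ Functor.whiskerLeft (pull h) (conn f g).hom

attribute [instance] SFib.cat

/-- An internal tensor structure on an `S`-fibered category: tensor product functors
`⊗_S : H(S) × H(S) ⥤ H(S)` together with internal monoidality isomorphisms
`m_f : f^*A ⊗ f^*B ≅ f^*(A ⊗ B)` satisfying the cocycle condition (mITS). -/
structure ITS {S : Type z} [Category.{w} S] (F : SFib.{v, u} S) where
  tensor : ∀ s : S, F.H s × F.H s ⥤ F.H s
  m : ∀ {t s : S} (f : t ⟶ s),
      (F.pull f).prod (F.pull f) ⋙ tensor t ≅ tensor s ⋙ F.pull f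
  mITS :
    ∀ {t s v : S} (f : t ⟶ s) (g : s ⟶ v),
      Functor.whiskerRight (NatTrans.prod (F.conn f g).hom (F.conn f g).hom) (tensor t) ≫
          Functor.whiskerLeft ((F.pull g).prod (F.pull g)) (m f).hom ≫
          Functor.whiskerRight (m g).hom (F.pull f) =
        (m (f ≫ g)).hom ≫ Functor.whiskerLeft (tensor v) (F.conn f g).hom

/-- The non-identity arrow of the interval category (modeled on `Fin 2`). -/
def intArrow : (0 : Fin 2) ⟶ (1 : Fin 2) := homOfLE (by decide)

section Aux
variable {S : Type z} [Category.{w} S] (F : SFib.{v, u} S) (T : ITS F)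

def Obj6 : S × Fin 2 → Type u := fun p =>
  match p.2 with
  | 0 => F.H p.1
  | 1 => F.H p.1 × F.H p.1

instance cat6 : ∀ p : S × Fin 2, Category.{v} (Obj6 F p) := fun p =>
  match p with
  | (s, 0) => inferInstanceAs (Category (F.H s))
  | (s, 1) => inferInstanceAs (Category (F.H s × F.H s))

def pull6 : ∀ {p q : S × Fin 2}, (p ⟶ q) → (Obj6 F q ⥤ Obj6 F p) := fun {p q} φ =>
  match p, q, φ with
  | (_, 0), (_, 0), φ => F.pull φ.1
  | (_, 1), (_, 1), φ => (F.pull φ.1).prod (F.pull φ.1)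
  | (_, 0), (s, 1), φ => T.tensor s ⋙ F.pull φ.1
  | (_, 1), (_, 0), φ => absurd φ.2.down.down (show ¬ (1:Fin 2) ≤ 0 by decide)

def conn6 : ∀ {p q r : S × Fin 2} (f : p ⟶ q) (g : q ⟶ r),
    pull6 F T (f ≫ g) ≅ pull6 F T g ⋙ pull6 F T f := fun {p q r} f g =>
  match p, q, r, f, g with
  | (_,0),(_,0),(_,0), f, g => F.conn f.1 g.1
  | (_,1),(_,1),(_,1), f, g => NatIso.prod (F.conn f.1 g.1) (F.conn f.1 g.1)
  | (_,0),(_,0),(v,1), f, g => Functor.isoWhiskerLeft (T.tensor v) (F.conn f.1 g.1)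
  | (_,0),(_,1),(v,1), f, g =>
      Functor.isoWhiskerLeft (T.tensor v) (F.conn f.1 g.1) ≪≫
        Functor.isoWhiskerRight (T.m g.1).symm (F.pull f.1)
  | (_,1),(_,0),_, f, _ => absurd f.2.down.down (show ¬ (1:Fin 2) ≤ 0 by decide)
  | (_,1),(_,1),(_,0), _, g => absurd g.2.down.down (show ¬ (1:Fin 2) ≤ 0 by decide)
  | (_,0),(_,1),(_,0), _, g => absurd g.2.down.down (show ¬ (1:Fin 2) ≤ 0 by decide)


theorem eqToHom_fst' {A : Type*} {B : Type*} [Category A] [Category B] {X Y : A × B}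
    (h : X = Y) : (eqToHom h).1 = eqToHom (congrArg Prod.fst h) := by cases h; rfl

theorem eqToHom_snd' {A : Type*} {B : Type*} [Category A] [Category B] {X Y : A × B}
    (h : X = Y) : (eqToHom h).2 = eqToHom (congrArg Prod.snd h) := by cases h; rfl

variable {t s v w : S}

theorem c0001 (f : t ⟶ s) (g : s ⟶ v) (h : v ⟶ w) :
    (Functor.isoWhiskerLeft (T.tensor w) (F.conn f (g ≫ h))).hom ≫
      Functor.whiskerRight (Functor.isoWhiskerLeft (T.tensor w) (F.conn g h)).hom (F.pull f) =
    eqToHom (show T.tensor w ⋙ F.pull (f ≫ g ≫ h) = T.tensor w ⋙ F.pull ((f ≫ g) ≫ h) by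
        rw [Category.assoc]) ≫
      (Functor.isoWhiskerLeft (T.tensor w) (F.conn (f ≫ g) h)).hom ≫
      Functor.whiskerLeft (T.tensor w ⋙ F.pull h) (F.conn f g).hom := by
  ext X
  have h1 := congr_app (F.cocycle f g h) ((T.tensor w).obj X)
  simpa using h1

theorem c0011 (f : t ⟶ s) (g : s ⟶ v) (h : v ⟶ w) :
    (Functor.isoWhiskerLeft (T.tensor w) (F.conn f (g ≫ h))).hom ≫
      Functor.whiskerRight (Functor.isoWhiskerLeft (T.tensor w) (F.conn g h) ≪≫
        Functor.isoWhiskerRight (T.m h).symm (F.pull g)).hom (F.pull f) =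
    eqToHom (show T.tensor w ⋙ F.pull (f ≫ g ≫ h) = T.tensor w ⋙ F.pull ((f ≫ g) ≫ h) by
        rw [Category.assoc]) ≫
      (Functor.isoWhiskerLeft (T.tensor w) (F.conn (f ≫ g) h) ≪≫
        Functor.isoWhiskerRight (T.m h).symm (F.pull (f ≫ g))).hom ≫
      Functor.whiskerLeft ((F.pull h).prod (F.pull h)) (Functor.isoWhiskerLeft (T.tensor v) (F.conn f g)).hom := by
  ext X
  have h1 := congr_app (F.cocycle f g h) ((T.tensor w).obj X)
  simp at h1 ⊢
  rw [reassoc_of% h1]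

theorem c0111 (f : t ⟶ s) (g : s ⟶ v) (h : v ⟶ w) :
    (Functor.isoWhiskerLeft (T.tensor w) (F.conn f (g ≫ h)) ≪≫
        Functor.isoWhiskerRight (T.m (g ≫ h)).symm (F.pull f)).hom ≫
      Functor.whiskerRight (NatIso.prod (F.conn g h) (F.conn g h)).hom (T.tensor s ⋙ F.pull f) =
    eqToHom (show T.tensor w ⋙ F.pull (f ≫ g ≫ h) = T.tensor w ⋙ F.pull ((f ≫ g) ≫ h) by
        rw [Category.assoc]) ≫
      (Functor.isoWhiskerLeft (T.tensor w) (F.conn (f ≫ g) h) ≪≫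
        Functor.isoWhiskerRight (T.m h).symm (F.pull (f ≫ g))).hom ≫
      Functor.whiskerLeft ((F.pull h).prod (F.pull h)) (Functor.isoWhiskerLeft (T.tensor v) (F.conn f g) ≪≫
        Functor.isoWhiskerRight (T.m g).symm (F.pull f)).hom := by
  ext X
  have h1 := congr_app (F.cocycle f g h) ((T.tensor w).obj X)
  have h2 := congr_app (T.mITS g h) X
  simp at h1 h2 ⊢
  rw [← reassoc_of% h1]
  have h4 : (T.m (g ≫ h)).inv.app X ≫
        (T.tensor s).map ((NatTrans.prod (F.conn g h).hom (F.conn g h).hom).app X) =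
      (F.conn g h).hom.app ((T.tensor w).obj X) ≫ (F.pull g).map ((T.m h).inv.app X) ≫
        (T.m g).inv.app ((F.pull h).obj X.1, (F.pull h).obj X.2) := by
    rw [← cancel_mono ((T.m g).hom.app ((F.pull h).obj X.1, (F.pull h).obj X.2)),
      ← cancel_mono ((F.pull g).map ((T.m h).hom.app X))]
    simp [h2, ← Functor.map_comp]
  simp only [← Functor.map_comp, Category.assoc]
  rw [h4]

theorem c1111 (f : t ⟶ s) (g : s ⟶ v) (h : v ⟶ w) :
    (NatIso.prod (F.conn f (g ≫ h)) (F.conn f (g ≫ h))).hom ≫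
      Functor.whiskerRight (NatIso.prod (F.conn g h) (F.conn g h)).hom ((F.pull f).prod (F.pull f)) =
    eqToHom (show (F.pull (f ≫ g ≫ h)).prod (F.pull (f ≫ g ≫ h)) =
          (F.pull ((f ≫ g) ≫ h)).prod (F.pull ((f ≫ g) ≫ h)) by rw [Category.assoc]) ≫
      (NatIso.prod (F.conn (f ≫ g) h) (F.conn (f ≫ g) h)).hom ≫
      Functor.whiskerLeft ((F.pull h).prod (F.pull h))
        (NatIso.prod (F.conn f g) (F.conn f g)).hom := by
  ext X
  · have h1 := congr_app (F.cocycle f g h) X.1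
    simp at h1
    simp [eqToHom_fst', h1]
  · have h2 := congr_app (F.cocycle f g h) X.2
    simp at h2
    simp [eqToHom_snd', h2]

def G6 : SFib.{v, u} (S × Fin 2) where
  H := Obj6 F
  cat := cat6 F
  pull := pull6 F T
  pull_id := by
    rintro ⟨s, i⟩
    fin_cases i
    · exact F.pull_id s
    · show (F.pull (𝟙 s)).prod (F.pull (𝟙 s)) = _
      rw [F.pull_id]; rfl
  conn := conn6 F T
  cocycle := by
    rintro ⟨t,ti⟩ ⟨s,si⟩ ⟨v,vi⟩ ⟨w,wi⟩ ⟨f,fi⟩ ⟨g,gi⟩ ⟨h,hi⟩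
    fin_cases ti <;> fin_cases si <;> fin_cases vi <;> fin_cases wi <;>
      first
      | exact absurd fi.down.down (show ¬ (1:Fin 2) ≤ 0 by decide)
      | exact absurd gi.down.down (show ¬ (1:Fin 2) ≤ 0 by decide)
      | exact absurd hi.down.down (show ¬ (1:Fin 2) ≤ 0 by decide)
      | skip
    · exact F.cocycle f g h
    · exact c0001 F T f g h
    · exact c0011 F T f g h
    · exact c0111 F T f g h
    · exact c1111 F f g h
end Aux

/-- An internal tensor structure `(⊗, m)` on an `S`-fibered category
`H` determines an `(S × I)`-fibered category `H^⊗` (here `I` is the interval category,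
modeled on `Fin 2` with its unique non-identity arrow `intArrow : 0 ⟶ 1`): its fiber
over `(s, 1)` is `H(s) × H(s)`, over `(s, 0)` it is `H(s)`, the inverse images are
`(f^*, f^*)`, `f^*` and `f^* ∘ (⊗)` respectively, and the connection isomorphisms,
built from `conn` and `m`, satisfy the cocycle condition (which is part of the
structure `SFib (S × Fin 2)`, covering all five cases of composable pairs). -/
theorem stmt6 {S : Type z} [Category.{w} S] (F : SFib.{v, u} S) (T : ITS F) :
    ∃ G : SFib.{v, u} (S × Fin 2),
      (∀ s : S, G.H (s, 1) = (F.H s × F.H s)) ∧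
      (∀ s : S, G.H (s, 0) = F.H s) ∧
      (∀ s : S, HEq (G.cat (s, 1)) (inferInstance : Category.{v} (F.H s × F.H s))) ∧
      (∀ s : S, HEq (G.cat (s, 0)) (F.cat s)) ∧
      (∀ {t s : S} (f : t ⟶ s),
        HEq (G.pull ((f, 𝟙 (1 : Fin 2)) : (t, (1 : Fin 2)) ⟶ (s, 1)))
          ((F.pull f).prod (F.pull f))) ∧
      (∀ {t s : S} (f : t ⟶ s),
        HEq (G.pull ((f, 𝟙 (0 : Fin 2)) : (t, (0 : Fin 2)) ⟶ (s, 0))) (F.pull f)) ∧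
      (∀ {t s : S} (f : t ⟶ s),
        HEq (G.pull ((f, intArrow) : (t, (0 : Fin 2)) ⟶ (s, 1)))
          (T.tensor s ⋙ F.pull f)) ∧
      (∀ {t s v : S} (f : t ⟶ s) (g : s ⟶ v),
        HEq (G.conn ((f, 𝟙 (1 : Fin 2)) : (t, (1 : Fin 2)) ⟶ (s, 1))
              ((g, 𝟙 (1 : Fin 2)) : (s, (1 : Fin 2)) ⟶ (v, 1)))
          (NatIso.prod (F.conn f g) (F.conn f g))) ∧
      (∀ {t s v : S} (f : t ⟶ s) (g : s ⟶ v),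
        HEq (G.conn ((f, 𝟙 (0 : Fin 2)) : (t, (0 : Fin 2)) ⟶ (s, 0))
              ((g, 𝟙 (0 : Fin 2)) : (s, (0 : Fin 2)) ⟶ (v, 0)))
          (F.conn f g)) ∧
      (∀ {t s v : S} (f : t ⟶ s) (g : s ⟶ v),
        HEq (G.conn ((f, 𝟙 (0 : Fin 2)) : (t, (0 : Fin 2)) ⟶ (s, 0))
              ((g, intArrow) : (s, (0 : Fin 2)) ⟶ (v, 1)))
          (Functor.isoWhiskerLeft (T.tensor v) (F.conn f g))) ∧
      (∀ {t s v : S} (f : t ⟶ s) (g : s ⟶ v),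
        HEq (G.conn ((f, intArrow) : (t, (0 : Fin 2)) ⟶ (s, 1))
              ((g, 𝟙 (1 : Fin 2)) : (s, (1 : Fin 2)) ⟶ (v, 1)))
          (Functor.isoWhiskerLeft (T.tensor v) (F.conn f g) ≪≫
            Functor.isoWhiskerRight (T.m g).symm (F.pull f))) := by
  exact ⟨G6 F T, fun s => rfl, fun s => rfl, fun s => HEq.rfl, fun s => HEq.rfl,
    fun f => HEq.rfl, fun f => HEq.rfl, fun f => HEq.rfl,
    fun f g => HEq.rfl, fun f g => HEq.rfl, fun f g => HEq.rfl, fun f g => HEq.rfl⟩
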